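/- Let s ≥ 1 and let (A, b) be a symmetric s-stage Runge–Kutta tableau: b_j = b_{s+1−j} and a_{ij} + a_{s+1−i, s+1−j} = b_j for all i, j. Let c_i = Σ_j a_{ij}, assume the c_i are distinct and Σ_i b_i c_i^{k−1} = 1/k for k = 1, …, s, and let b₁, b₂ ∈ ℝ^s be the (unique) vectors satisfying Σ_i (b₁)_i (2c_i)^{k−1} = 1/k and Σ_i (b₂)_i (2c_i − 1)^{k−1} = 1/k for k = 1, …, s. Then (b₁)_i = (b₂)_{s+1−i} for all i = 1, …, s. -/

import Mathlib

lemma aux_alt (k : ℕ) (hk : 1 ≤ k) :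
    ∑ m ∈ Finset.range k, (-1:ℝ)^m * ((k-1).choose m) * (1/(m+1)) = 1/k := by
  have hk0 : (k:ℝ) ≠ 0 := Nat.cast_ne_zero.mpr (by omega)
  have hshift : ∑ m ∈ Finset.range k, (-1:ℝ)^m * (k.choose (m+1)) = 1 := by
    have h0 : ∑ i ∈ Finset.range (k+1), (-1:ℤ)^i * (k.choose i) = 0 :=
      Int.alternating_sum_range_choose_of_ne (by omega)
    have h0' : ∑ i ∈ Finset.range (k+1), (-1:ℝ)^i * (k.choose i) = 0 := by
      exact_mod_cast congrArg (Int.cast : ℤ → ℝ) h0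
    rw [Finset.sum_range_succ'] at h0'
    simp only [pow_succ, pow_zero, Nat.choose_zero_right, Nat.cast_one, one_mul] at h0'
    rw [Finset.sum_congr rfl (fun x _ => show (-1:ℝ)^x * -1 * (k.choose (x+1):ℝ)
      = -((-1)^x * (k.choose (x+1))) from by ring), Finset.sum_neg_distrib] at h0'
    linarith
  have hmul : ∀ m ∈ Finset.range k,
      (k:ℝ) * ((-1:ℝ)^m * ((k-1).choose m) * (1/(m+1))) = (-1:ℝ)^m * (k.choose (m+1)) := by
    intro m hm
    have h := Nat.add_one_mul_choose_eq (k-1) m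
    simp only [Nat.succ_eq_add_one, Nat.sub_add_cancel hk] at h
    have h' : (k:ℝ) * ((k-1).choose m) = (k.choose (m+1)) * (m+1) := by exact_mod_cast h
    have hm1 : ((m:ℝ)+1) ≠ 0 := by positivity
    field_simp
    linear_combination h'
  have h2 := Finset.sum_congr rfl hmul
  rw [← Finset.mul_sum, hshift] at h2
  field_simp at h2 ⊢
  linarith

theorem stmt11 {s : ℕ} (hs : 1 ≤ s) (A : Fin s → Fin s → ℝ) (b : Fin s → ℝ)
    (hbsym : ∀ j, b j = b j.rev)
    (hAsym : ∀ i j, A i j + A i.rev j.rev = b j)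
    (c : Fin s → ℝ) (hc : ∀ i, c i = ∑ j, A i j) (hcinj : Function.Injective c)
    (hb : ∀ k : ℕ, 1 ≤ k → k ≤ s → ∑ i, b i * c i ^ (k - 1) = 1 / (k : ℝ))
    (b1 b2 : Fin s → ℝ)
    (hb1 : ∀ k : ℕ, 1 ≤ k → k ≤ s → ∑ i, b1 i * (2 * c i) ^ (k - 1) = 1 / (k : ℝ))
    (hb2 : ∀ k : ℕ, 1 ≤ k → k ≤ s → ∑ i, b2 i * (2 * c i - 1) ^ (k - 1) = 1 / (k : ℝ)) :
    ∀ i, b1 i = b2 i.rev := by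
  -- ∑ b = 1
  have hbsum : ∑ i, b i = 1 := by
    have := hb 1 le_rfl hs
    simpa using this
  -- c i.rev = 1 - c i
  have hcrev : ∀ i, c i.rev = 1 - c i := by
    intro i
    have h1 : c i + c i.rev = 1 := by
      calc c i + c i.rev = ∑ j, A i j + ∑ j : Fin s, A i.rev j.rev := by
            rw [hc, hc]
            congr 1
            exact Fintype.sum_bijective Fin.rev Fin.rev_bijective _ _
              (fun j => by rw [Fin.rev_rev])
        _ = ∑ j, (A i j + A i.rev j.rev) := Finset.sum_add_distrib.symm
        _ = ∑ j, b j := Finset.sum_congr rfl fun j _ => hAsym i j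
        _ = 1 := hbsum
    linarith
  -- reversed b2 satisfies the b1 quadrature conditions
  have key : ∀ k : ℕ, 1 ≤ k → k ≤ s →
      ∑ i, b2 i.rev * (2 * c i) ^ (k - 1) = 1 / (k : ℝ) := by
    intro k hk1 hks
    have hrev : ∑ i, b2 i.rev * (2 * c i) ^ (k - 1)
        = ∑ i, b2 i * (2 * c i.rev) ^ (k - 1) := by
      apply Fintype.sum_bijective Fin.rev Fin.rev_bijective
      intro i
      simp [Fin.rev_rev]
    rw [hrev]
    have hbin : ∀ i : Fin s, (2 * c i.rev) ^ (k - 1)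
        = ∑ m ∈ Finset.range k, (-1:ℝ)^m * ((k-1).choose m) * (2 * c i - 1) ^ m := by
      intro i
      have h2 : 2 * c i.rev = (-(2 * c i - 1)) + 1 := by rw [hcrev]; ring
      rw [h2, add_pow]
      have hrange : k - 1 + 1 = k := by omega
      rw [hrange]
      exact Finset.sum_congr rfl fun m hm => by rw [neg_pow]; ring
    rw [Finset.sum_congr rfl (fun i _ => by rw [hbin i])]
    simp_rw [Finset.mul_sum]
    rw [Finset.sum_comm]
    have hinner : ∀ m ∈ Finset.range k,
        ∑ i, b2 i * ((-1:ℝ)^m * ((k-1).choose m) * (2 * c i - 1) ^ m)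
          = (-1:ℝ)^m * ((k-1).choose m) * (1/(m+1)) := by
      intro m hm
      rw [Finset.mem_range] at hm
      have h2 := hb2 (m+1) (by omega) (by omega)
      rw [Nat.add_sub_cancel] at h2
      push_cast at h2
      calc ∑ i, b2 i * ((-1:ℝ)^m * ((k-1).choose m) * (2 * c i - 1) ^ m)
          = ((-1:ℝ)^m * ((k-1).choose m)) * ∑ i, b2 i * (2 * c i - 1) ^ m := by
            rw [Finset.mul_sum]; exact Finset.sum_congr rfl fun i _ => by ring
        _ = (-1:ℝ)^m * ((k-1).choose m) * (1/(m+1)) := by rw [h2]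
    rw [Finset.sum_congr rfl hinner]
    exact aux_alt k hk1
  -- uniqueness via Vandermonde
  intro i
  have hinj2 : Function.Injective (fun i : Fin s => 2 * c i) := by
    intro x y h
    exact hcinj (by dsimp at h; linarith)
  set M := Matrix.vandermonde (fun i : Fin s => 2 * c i) with hM
  have hdet : M.det ≠ 0 := by
    rw [hM, Matrix.det_vandermonde]
    apply Finset.prod_ne_zero_iff.mpr
    intro x _
    apply Finset.prod_ne_zero_iff.mpr
    intro y hy
    have hxy : x < y := Finset.mem_Ioi.mp hy
    intro h
    exact absurd (hcinj (by linarith : c y = c x)) (ne_of_gt hxy)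
  have hker : Matrix.vecMul (fun i => b1 i - b2 i.rev) M = 0 := by
    funext j
    have h1 := hb1 (j.val + 1) (by omega) (by omega)
    have h2 := key (j.val + 1) (by omega) (by omega)
    rw [Nat.add_sub_cancel] at h1 h2
    simp only [Matrix.vecMul, dotProduct, hM, Matrix.vandermonde, Pi.zero_apply,
      Matrix.of_apply]
    simp only [sub_mul]
    rw [Finset.sum_sub_distrib, h1, h2, sub_self]
  have := Matrix.eq_zero_of_vecMul_eq_zero hdet hker
  have := congrFun this i
  dsimp at this
  linarith
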